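/- Every finite chordal simple graph on n ≥ 1 vertices admits at least 2^(n−1) perfect elimination orderings. -/

import Mathlib

/-- A simple graph is chordal if every cycle of length at least four has a
chord: an edge of the graph joining two vertices of the cycle that are not
consecutive on the cycle (i.e. the edge is not an edge of the cycle). -/
def SimpleGraph.IsChordal {V : Type*} (G : SimpleGraph V) : Prop :=
  ∀ (v : V) (c : G.Walk v v), c.IsCycle → 4 ≤ c.length →
    ∃ x y : V, x ∈ c.support ∧ y ∈ c.support ∧ G.Adj x y ∧ s(x, y) ∉ c.edges

open SimpleGraph

universe u


def IsSimpl {V : Type*} (G : SimpleGraph V) (v : V) : Prop :=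
  ∀ x y : V, G.Adj v x → G.Adj v y → x ≠ y → G.Adj x y

lemma isChordal_induce {V : Type*} {G : SimpleGraph V} (hG : G.IsChordal) (S : Set V) :
    (G.induce S).IsChordal := by
  intro v c hc hl
  set f : G.induce S ↪g G := Embedding.induce S with hf
  have hinj : Function.Injective f.toHom := f.injective
  obtain ⟨x, y, hx, hy, hxy, hne⟩ := hG v (c.map f.toHom) (hc.map hinj)
    (le_of_le_of_eq hl (Walk.length_map f.toHom c).symm)
  have hx : x ∈ (c.map f.toHom).support := hx
  have hy : y ∈ (c.map f.toHom).support := hy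
  have hne : s(x, y) ∉ (c.map f.toHom).edges := hne
  rw [Walk.support_map, List.mem_map] at hx hy
  obtain ⟨x', hx', rfl⟩ := hx
  obtain ⟨y', hy', rfl⟩ := hy
  refine ⟨x', y', hx', hy', hxy, ?_⟩
  intro hmem
  apply hne
  rw [Walk.edges_map, List.mem_map]
  exact ⟨_, hmem, rfl⟩

lemma exists_decomp {V : Type*} [DecidableEq V] {G : SimpleGraph V} {s t x y : V}
    (p : G.Walk s t) (hx : x ∈ p.support) (hy : y ∈ p.support) :
    ∃ (a b : V) (w1 : G.Walk s a) (w2 : G.Walk a b) (w3 : G.Walk b t),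
      p = w1.append (w2.append w3) ∧ s(a, b) = s(x, y) := by
  by_cases h : y ∈ (p.takeUntil x hx).support
  · refine ⟨y, x, (p.takeUntil x hx).takeUntil y h, (p.takeUntil x hx).dropUntil y h,
      p.dropUntil x hx, ?_, Sym2.eq_swap⟩
    conv_lhs => rw [← p.take_spec hx, ← (p.takeUntil x hx).take_spec h]
    rw [Walk.append_assoc]
  · have h' : y ∈ (p.dropUntil x hx).support := by
      have := p.take_spec hx
      rw [← this] at hy
      rcases (Walk.mem_support_append_iff _ _).1 hy with h1 | h1
      · exact absurd h1 h
      · exact h1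
    refine ⟨x, y, p.takeUntil x hx, (p.dropUntil x hx).takeUntil y h',
      (p.dropUntil x hx).dropUntil y h', ?_, rfl⟩
    conv_lhs => rw [← p.take_spec hx, ← (p.dropUntil x hx).take_spec h']

lemma mem_edges_of_adj_of_min {V : Type*} [DecidableEq V] {G : SimpleGraph V} {s t : V}
    (T : Set V) (p : G.Walk s t)
    (hsupp : ∀ v ∈ p.support, v ∈ T)
    (hmin : ∀ q : G.Walk s t, q.IsPath → (∀ v ∈ q.support, v ∈ T) → p.length ≤ q.length)
    {x y : V} (hx : x ∈ p.support) (hy : y ∈ p.support) (hxy : G.Adj x y) :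
    s(x, y) ∈ p.edges := by
  obtain ⟨a, b, w1, w2, w3, hp, hab⟩ := exists_decomp p hx hy
  have hadj : G.Adj a b := by
    rcases Sym2.eq_iff.1 hab with ⟨rfl, rfl⟩ | ⟨rfl, rfl⟩
    · exact hxy
    · exact hxy.symm
  rw [← hab]
  match w2 with
  | Walk.nil => exact absurd rfl hadj.ne
  | Walk.cons h Walk.nil =>
    rw [hp]
    simp [Walk.edges_append]
  | Walk.cons h (Walk.cons h' w) =>
    exfalso
    set q : G.Walk s t := w1.append (Walk.cons hadj w3) with hq
    have hsub : q.support ⊆ p.support := by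
      intro v hv
      rw [hq, Walk.mem_support_append_iff] at hv
      rw [hp, Walk.mem_support_append_iff]
      rcases hv with hv | hv
      · exact Or.inl hv
      · rw [Walk.support_cons] at hv
        rcases List.mem_cons.1 hv with rfl | hv
        · exact Or.inr (Walk.start_mem_support _)
        · exact Or.inr (by rw [Walk.mem_support_append_iff]; exact Or.inr hv)
    have h1 := hmin q.bypass q.bypass_isPath
      (fun v hv => hsupp v (hsub (q.support_bypass_subset hv)))
    have h2 := q.length_bypass_le
    have h3 : q.length < p.length := by
      rw [hp, hq]
      simp only [Walk.length_append, Walk.length_cons]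
      omega
    omega

lemma exists_min_walk {V : Type*} {G : SimpleGraph V} {s t : V} (T : Set V)
    (h : ∃ p : G.Walk s t, p.IsPath ∧ ∀ v ∈ p.support, v ∈ T) :
    ∃ p : G.Walk s t, p.IsPath ∧ (∀ v ∈ p.support, v ∈ T) ∧
      ∀ q : G.Walk s t, q.IsPath → (∀ v ∈ q.support, v ∈ T) → p.length ≤ q.length := by
  classical
  have hn : ∃ n : ℕ, ∃ p : G.Walk s t, (p.IsPath ∧ ∀ v ∈ p.support, v ∈ T) ∧ p.length = n := by
    obtain ⟨p, hp⟩ := h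
    exact ⟨p.length, p, hp, rfl⟩
  obtain ⟨p, ⟨hp1, hp2⟩, hlen⟩ := Nat.find_spec hn
  refine ⟨p, hp1, hp2, fun q hq1 hq2 => ?_⟩
  rw [hlen]
  exact Nat.find_min' hn ⟨q, ⟨hq1, hq2⟩, rfl⟩

lemma dirac_step {N : ℕ} {V : Type u} [Fintype V]
    (IH : ∀ (W : Type u) [Fintype W] (H : SimpleGraph W), Fintype.card W ≤ N →
      H.IsChordal → (∀ x y : W, x ≠ y → H.Adj x y) ∨
        ∃ x y : W, x ≠ y ∧ ¬H.Adj x y ∧ IsSimpl H x ∧ IsSimpl H y)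
    (G : SimpleGraph V) (hcard : Fintype.card V ≤ N + 1) (hG : G.IsChordal)
    {a b : V} (hab : ¬G.Adj a b) (hne : a ≠ b) :
    ∃ x : V, IsSimpl G x ∧ ¬G.Adj x b ∧ x ≠ b := by
  classical
  set D : Set V := {v | ¬G.Adj b v ∧ v ≠ b} with hD
  set C : Set V := {v | ∃ w : G.Walk a v, ∀ u ∈ w.support, u ∈ D} with hC
  have haD : a ∈ D := ⟨fun h => hab h.symm, hne⟩
  have haC : a ∈ C := ⟨Walk.nil, by intro u hu; simp at hu; subst hu; exact haD⟩
  have hCD : C ⊆ D := by rintro v ⟨w, hw⟩; exact hw v w.end_mem_support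
  have hCclosed : ∀ c ∈ C, ∀ u, G.Adj c u → u ∈ D → u ∈ C := by
    rintro c ⟨w, hw⟩ u hadj huD
    refine ⟨w.concat hadj, fun x hx => ?_⟩
    rw [Walk.support_concat, List.mem_append] at hx
    rcases hx with hx | hx
    · exact hw x hx
    · simp at hx; subst hx; exact huD
  have hCsupp : ∀ c ∈ C, ∃ w : G.Walk a c, ∀ u ∈ w.support, u ∈ C := by
    rintro c ⟨w, hw⟩
    exact ⟨w, fun u hu => ⟨w.takeUntil u hu, fun x hx => hw x (w.support_takeUntil_subset hu hx)⟩⟩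
  set S : Set V := {v | v ∉ C ∧ ∃ c ∈ C, G.Adj c v} with hS
  have hSb : ∀ v ∈ S, G.Adj b v := by
    rintro v ⟨hvC, c, hcC, hadj⟩
    by_contra hbv
    rcases eq_or_ne v b with rfl | hvb
    · exact (hCD hcC).1 hadj.symm
    · exact hvC (hCclosed c hcC v hadj ⟨hbv, hvb⟩)
  have hbC : b ∉ C := fun h => (hCD h).2 rfl
  have hbS : b ∉ S := fun h => G.irrefl (hSb b h)
  have hnbr : ∀ c ∈ C, ∀ u, G.Adj c u → u ∈ C ∪ S := by
    intro c hc u hadj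
    by_cases h : u ∈ C
    · exact Or.inl h
    · exact Or.inr ⟨h, c, hc, hadj⟩
  have hSclique : ∀ s ∈ S, ∀ t ∈ S, s ≠ t → G.Adj s t := by
    intro s hs t ht hst
    by_contra hadjst
    obtain ⟨hsC, cs, hcsC, hcs⟩ := hs
    obtain ⟨htC, ct, hctC, hct⟩ := ht
    obtain ⟨w1, hw1⟩ := hCsupp cs hcsC
    obtain ⟨w2, hw2⟩ := hCsupp ct hctC
    set T : Set V := C ∪ {s, t} with hT
    have hex : ∃ p : G.Walk s t, p.IsPath ∧ ∀ v ∈ p.support, v ∈ T := by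
      set q : G.Walk s t :=
        Walk.cons hcs.symm ((w1.reverse.append w2).append (Walk.cons hct Walk.nil)) with hq
      have hqsup : ∀ v ∈ q.support, v ∈ T := by
        intro v hv
        rw [hq, Walk.support_cons, List.mem_cons] at hv
        rcases hv with rfl | hv
        · exact Or.inr (Or.inl rfl)
        rw [Walk.mem_support_append_iff] at hv
        rcases hv with hv | hv
        · rw [Walk.mem_support_append_iff] at hv
          rcases hv with hv | hv
          · rw [Walk.support_reverse, List.mem_reverse] at hv
            exact Or.inl (hw1 v hv)
          · exact Or.inl (hw2 v hv)
        · simp only [Walk.support_cons, Walk.support_nil, List.mem_cons,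
            List.mem_singleton] at hv
          rcases hv with rfl | hv
          · exact Or.inl hctC
          · simp at hv; subst hv; exact Or.inr (Or.inr rfl)
      exact ⟨q.bypass, q.bypass_isPath,
        fun v hv => hqsup v (q.support_bypass_subset hv)⟩
    obtain ⟨p, hp, hpT, hmin⟩ := exists_min_walk T hex
    have hlen2 : 2 ≤ p.length := by
      by_contra hl
      interval_cases hpl : p.length
      · exact hst (Walk.eq_of_length_eq_zero hpl)
      · exact hadjst (Walk.adj_of_length_eq_one hpl)
    have hbs : G.Adj b s := hSb s ⟨hsC, cs, hcsC, hcs⟩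
    have hbt : G.Adj b t := hSb t ⟨htC, ct, hctC, hct⟩
    have hbp : b ∉ p.support := by
      intro hmem
      rcases hpT b hmem with h | h
      · exact hbC h
      · rcases h with rfl | h
        · exact G.irrefl hbs
        · simp at h; subst h; exact G.irrefl hbt
    set pc : G.Walk s b := p.concat hbt.symm with hpc
    have hpc_path : pc.IsPath := by
      rw [← Walk.isPath_reverse_iff, hpc, Walk.reverse_concat, Walk.cons_isPath_iff]
      exact ⟨hp.reverse, by rw [Walk.support_reverse, List.mem_reverse]; exact hbp⟩
    set c : G.Walk b b := Walk.cons hbs pc with hcdef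
    have hpcedges : pc.edges = p.edges.concat s(t, b) := by
      rw [hpc, Walk.edges_concat]
    have hcyc : c.IsCycle := by
      rw [hcdef, Walk.cons_isCycle_iff]
      refine ⟨hpc_path, ?_⟩
      intro hmem
      rw [hpcedges, List.concat_eq_append, List.mem_append] at hmem
      rcases hmem with hmem | hmem
      · exact hbp (p.fst_mem_support_of_mem_edges hmem)
      · simp only [List.mem_singleton] at hmem
        rcases Sym2.eq_iff.1 hmem with ⟨rfl, rfl⟩ | ⟨h1, h2⟩
        · exact G.irrefl hbs
        · exact hst h2
    have hclen : 4 ≤ c.length := by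
      rw [hcdef, Walk.length_cons, hpc, Walk.length_concat]
      omega
    obtain ⟨x, y, hxs, hys, hxy, hxyne⟩ := hG b c hcyc hclen
    have hsupc : ∀ v ∈ c.support, v = b ∨ v ∈ p.support := by
      intro v hv
      rw [hcdef, Walk.support_cons, List.mem_cons] at hv
      rcases hv with rfl | hv
      · exact Or.inl rfl
      rw [hpc, Walk.support_concat, List.mem_append] at hv
      rcases hv with hv | hv
      · exact Or.inr hv
      · simp at hv; subst hv; exact Or.inl rfl
    have hedge : ∀ e ∈ p.edges, e ∈ c.edges := by
      intro e he
      rw [hcdef, Walk.edges_cons, hpcedges, List.concat_eq_append]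
      simp only [List.mem_cons, List.mem_append]
      exact Or.inr (Or.inl he)
    have hbchord : ∀ z, G.Adj b z → z ∈ p.support → s(b, z) ∈ c.edges := by
      intro z hz hzp
      rcases hpT z hzp with hzC | hzst
      · exact absurd hz (hCD hzC).1
      rw [hcdef, Walk.edges_cons, hpcedges, List.concat_eq_append]
      simp only [List.mem_cons, List.mem_append, List.mem_singleton]
      rcases hzst with rfl | hzst
      · exact Or.inl rfl
      · simp at hzst; subst hzst
        exact Or.inr (Or.inr (by rw [Sym2.eq_swap]; exact Or.inl rfl))
    rcases hsupc x hxs with rfl | hxp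
    · rcases hsupc y hys with rfl | hyp
      · exact G.irrefl hxy
      · exact hxyne (hbchord y hxy hyp)
    · rcases hsupc y hys with rfl | hyp
      · exact hxyne (by rw [Sym2.eq_swap]; exact hbchord x hxy.symm hxp)
      · exact hxyne (hedge _ (mem_edges_of_adj_of_min T p hpT hmin hxp hyp hxy))
  -- now apply IH to the induced graph on C ∪ S
  set U : Set V := C ∪ S with hU
  have hbU : b ∉ U := fun h => h.elim hbC hbS
  have hcardU : Fintype.card U ≤ N := by
    have hlt : Fintype.card U < Fintype.card V := by
      convert Fintype.card_subtype_lt (p := fun v => v ∈ U) hbU using 2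
    omega
  rcases IH U (G.induce U) hcardU (isChordal_induce hG U) with
    hcomp | ⟨u, w, huw, hnadj, hsu, hsw⟩
  · refine ⟨a, ?_, fun h => haD.1 h.symm, haD.2⟩
    intro x y hax hay hxy
    have hx : x ∈ U := hnbr a haC x hax
    have hy : y ∈ U := hnbr a haC y hay
    exact hcomp ⟨x, hx⟩ ⟨y, hy⟩ (fun h => hxy (congrArg Subtype.val h))
  · have key : ∀ z : U, (z : V) ∈ C → IsSimpl (G.induce U) z →
        ∃ x : V, IsSimpl G x ∧ ¬G.Adj x b ∧ x ≠ b := by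
      intro z hzC hz
      refine ⟨z, ?_, fun h => (hCD hzC).1 h.symm, (hCD hzC).2⟩
      intro x y hax hay hxy
      have hx : x ∈ U := hnbr z hzC x hax
      have hy : y ∈ U := hnbr z hzC y hay
      exact hz ⟨x, hx⟩ ⟨y, hy⟩ hax hay (fun h => hxy (congrArg Subtype.val h))
    by_cases hu : (u : V) ∈ C
    · exact key u hu hsu
    · by_cases hw : (w : V) ∈ C
      · exact key w hw hsw
      · exfalso
        have huS : (u : V) ∈ S := u.2.resolve_left hu
        have hwS : (w : V) ∈ S := w.2.resolve_left hw
        exact hnadj (hSclique u huS w hwS (Subtype.coe_injective.ne huw))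

lemma dirac : ∀ (N : ℕ) (V : Type u) [Fintype V] (G : SimpleGraph V), Fintype.card V ≤ N →
    G.IsChordal → (∀ x y : V, x ≠ y → G.Adj x y) ∨
      ∃ x y : V, x ≠ y ∧ ¬G.Adj x y ∧ IsSimpl G x ∧ IsSimpl G y := by
  intro N
  induction N with
  | zero =>
    intro V _ G hc _
    left
    intro x y hxy
    have : IsEmpty V := Fintype.card_eq_zero_iff.1 (Nat.le_zero.1 hc)
    exact this.elim x
  | succ N ih =>
    intro V _ G hc hG
    by_cases hcomp : ∀ x y : V, x ≠ y → G.Adj x y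
    · exact Or.inl hcomp
    · push_neg at hcomp
      obtain ⟨a, b, hne, hab⟩ := hcomp
      obtain ⟨x, hx, hxb, hxbne⟩ := dirac_step ih G hc hG hab hne
      obtain ⟨y, hy, hyx, hyxne⟩ := dirac_step ih G hc hG
        (fun h => hxb h.symm) (Ne.symm hxbne)
      exact Or.inr ⟨x, y, Ne.symm hyxne, fun h => hyx h.symm, hx, hy⟩

lemma two_simplicial {V : Type u} [Fintype V] (G : SimpleGraph V) (hG : G.IsChordal)
    (h2 : 2 ≤ Fintype.card V) : ∃ x y : V, x ≠ y ∧ IsSimpl G x ∧ IsSimpl G y := by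
  rcases dirac (Fintype.card V) V G le_rfl hG with hcomp | ⟨x, y, hxy, _, hx, hy⟩
  · obtain ⟨x, y, hxy⟩ := Fintype.exists_pair_of_one_lt_card h2
    exact ⟨x, y, hxy, fun a b ha hb hab => hcomp a b hab, fun a b ha hb hab => hcomp a b hab⟩
  · exact ⟨x, y, hxy, hx, hy⟩

/-- `v` is simplicial in the subgraph of `G` induced by the vertex set `S`:
any two distinct neighbors of `v` inside `S` are adjacent. -/
def SimpleGraph.IsSimplicialIn {V : Type*} (G : SimpleGraph V) (S : Set V)
    (v : V) : Prop :=
  ∀ x y : V, x ∈ S → y ∈ S → G.Adj v x → G.Adj v y → x ≠ y → G.Adj x y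

/-- `σ` is a perfect elimination ordering of `G`: for each `i`, the vertex
`σ i` is simplicial in the subgraph induced by `{σ j | j ≥ i}`. -/
def IsPerfectEliminationOrdering {V : Type*} {n : ℕ} (G : SimpleGraph V)
    (σ : Fin n ≃ V) : Prop :=
  ∀ i : Fin n, G.IsSimplicialIn {x : V | ∃ j : Fin n, i ≤ j ∧ σ j = x} (σ i)

def extEquiv {V : Type*} [DecidableEq V] {m : ℕ} (v : V)
    (σ' : Fin m ≃ {w : V // w ≠ v}) : Fin (m + 1) ≃ V where
  toFun i := Fin.cases v (fun j => (σ' j : V)) i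
  invFun u := if h : u = v then 0 else (σ'.symm ⟨u, h⟩).succ
  left_inv i := by
    refine Fin.cases ?_ (fun j => ?_) i
    · simp
    · simp [(σ' j).2]
  right_inv u := by
    by_cases h : u = v
    · subst h; simp
    · simp [h]

@[simp] lemma extEquiv_zero {V : Type*} [DecidableEq V] {m : ℕ} (v : V)
    (σ' : Fin m ≃ {w : V // w ≠ v}) : extEquiv v σ' 0 = v := rfl

@[simp] lemma extEquiv_succ {V : Type*} [DecidableEq V] {m : ℕ} (v : V)
    (σ' : Fin m ≃ {w : V // w ≠ v}) (j : Fin m) :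
    extEquiv v σ' j.succ = (σ' j : V) := by
  show (Fin.cases v (fun j => (σ' j : V)) j.succ : V) = _
  simp

lemma peo_ext {V : Type*} [DecidableEq V] {m : ℕ} (G : SimpleGraph V) (v : V)
    (hv : IsSimpl G v) (σ' : Fin m ≃ {w : V // w ≠ v})
    (hσ' : IsPerfectEliminationOrdering (G.induce {w | w ≠ v}) σ') :
    IsPerfectEliminationOrdering G (extEquiv v σ') := by
  intro i
  refine Fin.cases ?_ (fun k => ?_) i
  · intro x y _ _ hax hay hxy
    rw [extEquiv_zero] at hax hay
    exact hv x y hax hay hxy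
  · intro x y hxS hyS hax hay hxy
    obtain ⟨jx, hjx, hjxe⟩ := hxS
    obtain ⟨jy, hjy, hjye⟩ := hyS
    have hjx0 : jx ≠ 0 := by
      intro h; subst h
      exact absurd (Fin.le_antisymm hjx (Fin.zero_le _)) (by simp [Fin.ext_iff])
    have hjy0 : jy ≠ 0 := by
      intro h; subst h
      exact absurd (Fin.le_antisymm hjy (Fin.zero_le _)) (by simp [Fin.ext_iff])
    obtain ⟨jx', rfl⟩ := Fin.exists_succ_eq.2 hjx0
    obtain ⟨jy', rfl⟩ := Fin.exists_succ_eq.2 hjy0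
    rw [extEquiv_succ] at hjxe hjye
    rw [extEquiv_succ] at hax hay
    subst hjxe
    subst hjye
    have hkx : k ≤ jx' := by
      have := hjx
      rwa [Fin.succ_le_succ_iff] at this
    have hky : k ≤ jy' := by
      have := hjy
      rwa [Fin.succ_le_succ_iff] at this
    exact hσ' k (σ' jx') (σ' jy') ⟨jx', hkx, rfl⟩ ⟨jy', hky, rfl⟩ hax hay
      (fun h => hxy (congrArg Subtype.val h))

lemma main_aux : ∀ (n : ℕ) (V : Type u) [Fintype V] (G : SimpleGraph V), G.IsChordal →
    Fintype.card V = n → 1 ≤ n →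
    2 ^ (n - 1) ≤ Nat.card {σ : Fin n ≃ V // IsPerfectEliminationOrdering G σ} := by
  intro n
  induction n with
  | zero => intro V _ G _ _ h; omega
  | succ m ih =>
    intro V _ G hG hcard _
    classical
    have hfinV : Finite V := Finite.of_fintype V
    have hfinE : Finite (Fin (m + 1) ≃ V) :=
      Finite.of_injective (fun e => (e : Fin (m + 1) → V)) (fun _ _ h => Equiv.coe_fn_injective h)
    rcases Nat.eq_zero_or_pos m with rfl | hm
    · -- n = 1
      have hne : Nonempty V := Fintype.card_pos_iff.1 (by omega)
      have hsub : Subsingleton V := Fintype.card_le_one_iff_subsingleton.1 (by omega)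
      have σ : Fin 1 ≃ V := Fintype.equivOfCardEq (by simpa using hcard.symm)
      have hσ : IsPerfectEliminationOrdering G σ := by
        intro i x y _ _ _ _ hxy
        exact absurd (Subsingleton.elim x y) hxy
      have : Nonempty {σ : Fin 1 ≃ V // IsPerfectEliminationOrdering G σ} := ⟨σ, hσ⟩
      simpa using Nat.one_le_iff_ne_zero.2 (Nat.card_ne_zero.2 ⟨this, inferInstance⟩)
    · -- n = m + 1, m ≥ 1
      obtain ⟨v₁, v₂, hv12, hs1, hs2⟩ := two_simplicial G hG (by omega)
      have hcard' : ∀ v : V, Fintype.card {w : V // w ≠ v} = m := by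
        intro v
        have h0 := Fintype.card_subtype_compl (p := fun w => w = v)
        simp only [Fintype.card_subtype_eq] at h0
        have h1 : Fintype.card {w : V // w ≠ v} = Fintype.card V - 1 := by
          convert h0 using 2
        rw [h1, hcard]
        omega
      -- the two injections
      have key : ∀ v : V, IsSimpl G v →
          2 ^ (m - 1) ≤ Nat.card {σ : Fin (m + 1) ≃ V //
            IsPerfectEliminationOrdering G σ ∧ σ 0 = v} := by
        intro v hv
        have hind : (G.induce {w : V | w ≠ v}).IsChordal := isChordal_induce hG _
        have hle := ih {w : V // w ≠ v} (G.induce {w : V | w ≠ v}) hind (hcard' v) hm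
        refine le_trans hle (Nat.card_le_card_of_injective
          (fun σ' => ⟨extEquiv v σ'.1, peo_ext G v hv σ'.1 σ'.2, rfl⟩) ?_)
        rintro ⟨σ₁, h1⟩ ⟨σ₂, h2⟩ h
        simp only [Subtype.mk_eq_mk] at h ⊢
        ext j
        have := congrFun (congrArg (fun (e : Fin (m+1) ≃ V) => (e : Fin (m+1) → V)) h) j.succ
        simp only [extEquiv_succ] at this
        exact this
      -- combine
      have hinj : Function.Injective (fun x :
          {σ : Fin (m + 1) ≃ V // IsPerfectEliminationOrdering G σ ∧ σ 0 = v₁} ⊕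
          {σ : Fin (m + 1) ≃ V // IsPerfectEliminationOrdering G σ ∧ σ 0 = v₂} =>
          (Sum.elim (fun σ => (⟨σ.1, σ.2.1⟩ : {σ : Fin (m + 1) ≃ V //
            IsPerfectEliminationOrdering G σ})) (fun σ => ⟨σ.1, σ.2.1⟩) x)) := by
        rintro (⟨σ₁, h1, e1⟩ | ⟨σ₁, h1, e1⟩) (⟨σ₂, h2, e2⟩ | ⟨σ₂, h2, e2⟩) h <;>
          simp only [Sum.elim_inl, Sum.elim_inr, Subtype.mk_eq_mk] at h
        · simp [h]
        · exact absurd (by rw [← e1, ← e2, h]) hv12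
        · exact absurd (by rw [← e1, ← e2, h]) hv12.symm
        · simp [h]
      have hsum := Nat.card_le_card_of_injective _ hinj
      rw [Nat.card_sum] at hsum
      have h1 := key v₁ hs1
      have h2 := key v₂ hs2
      have hpow : 2 ^ (m + 1 - 1) = 2 ^ (m - 1) + 2 ^ (m - 1) := by
        rw [Nat.add_sub_cancel, ← Nat.two_mul, ← pow_succ']
        congr 1
        omega
      omega


/-- Every finite chordal simple graph on `n ≥ 1` vertices admits at least
`2^(n−1)` perfect elimination orderings. -/
theorem chordal_many_peo {V : Type*} [Fintype V] {n : ℕ}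
    (G : SimpleGraph V) (hG : G.IsChordal)
    (hn : Fintype.card V = n) (hn1 : 1 ≤ n) :
    2 ^ (n - 1) ≤ Nat.card {σ : Fin n ≃ V // IsPerfectEliminationOrdering G σ} :=
  main_aux n V G hG hn hn1
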